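/- Let R : [0,∞) → [0,∞) be nonnegative and integrable with ∫₀^∞ t R(t) dt < ∞, and let m ≥ 0, Q_A ∈ [0,1]. For T > 0 and v ≥ 0 define E(T,v) = Q_A·m·(Tv + ∫₀^{Tv} s R(Tv−s) ds). Then for every b > 0, sup_{v ∈ [0,b]} | T⁻¹ E(T,v) − v m Q_A (‖R‖_{L¹} + 1) | → 0 as T → ∞. -/

import Mathlib

open MeasureTheory Set Filter

theorem mean_LLN_uniform
    (R : ℝ → ℝ) (hRmeas : Measurable R) (hRpos : ∀ t, 0 ≤ R t)
    (hRint : IntegrableOn R (Ioi 0))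
    (hRmom : IntegrableOn (fun t => t * R t) (Ioi 0))
    (m QA : ℝ) (hm : 0 ≤ m) (hQA : QA ∈ Icc (0:ℝ) 1)
    (E : ℝ → ℝ → ℝ)
    (hE : ∀ T > 0, ∀ v ≥ 0,
      E T v = QA * m * (T * v + ∫ s in Ioc (0:ℝ) (T * v), s * R (T * v - s))) :
    ∀ b > 0,
      Tendsto
        (fun T => ⨆ v : Icc (0:ℝ) b,
          |T⁻¹ * E T v - (v : ℝ) * m * QA * ((∫ t in Ioi (0:ℝ), R t) + 1)|)
        atTop (nhds 0) := by
  intro b hb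
  set L := ∫ t in Ioi (0:ℝ), R t with hLdef
  set C := ∫ t in Ioi (0:ℝ), t * R t with hCdef
  have hC : 0 ≤ C :=
    setIntegral_nonneg measurableSet_Ioi fun t ht => mul_nonneg (le_of_lt ht) (hRpos t)
  have hmomnn : 0 ≤ᵐ[volume.restrict (Ioi (0:ℝ))] fun t => t * R t :=
    ae_restrict_of_forall_mem measurableSet_Ioi fun t ht => mul_nonneg (le_of_lt ht) (hRpos t)
  have key : ∀ T : ℝ, 0 < T → ∀ v : ℝ, 0 ≤ v → v ≤ b →
      |T⁻¹ * E T v - v * m * QA * (L + 1)| ≤ QA * m * (2 * C) * T⁻¹ := by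
    intro T hT v hv0 hvb
    rcases hv0.eq_or_lt with h | hvpos
    · subst h
      have hE0 : E T 0 = 0 := by
        rw [hE T hT 0 le_rfl]; simp
      rw [hE0]
      simp only [mul_zero, zero_mul, sub_zero, abs_zero]
      exact mul_nonneg (mul_nonneg (mul_nonneg hQA.1 hm) (by linarith)) (inv_nonneg.mpr hT.le)
    · set A := T * v with hAdef
      have hA : 0 < A := mul_pos hT hvpos
      have hint1 : IntegrableOn R (Ioc 0 A) := hRint.mono_set Ioc_subset_Ioi_self
      have hint2 : IntegrableOn (fun u => u * R u) (Ioc 0 A) :=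
        hRmom.mono_set Ioc_subset_Ioi_self
      have hint3 : IntegrableOn (fun u => u * R u) (Ioi A) :=
        hRmom.mono_set (Ioi_subset_Ioi hA.le)
      have hint4 : IntegrableOn R (Ioi A) := hRint.mono_set (Ioi_subset_Ioi hA.le)
      set IR := ∫ u in Ioc (0:ℝ) A, R u with hIRdef
      set IuR := ∫ u in Ioc (0:ℝ) A, u * R u with hIuRdef
      set tail := ∫ u in Ioi A, R u with htaildef
      -- change of variables
      have hcv : (∫ s in Ioc (0:ℝ) A, s * R (A - s)) = A * IR - IuR := by
        have h1 : (∫ s in Ioc (0:ℝ) A, s * R (A - s)) =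
            ∫ s in (0:ℝ)..A, s * R (A - s) :=
          (intervalIntegral.integral_of_le hA.le).symm
        have h2 : (∫ s in (0:ℝ)..A, s * R (A - s)) =
            ∫ u in (0:ℝ)..A, (A - u) * R u := by
          have := intervalIntegral.integral_comp_sub_left (a := 0) (b := A)
            (fun u => (A - u) * R u) A
          simpa [sub_sub_cancel] using this
        have h3 : (∫ u in (0:ℝ)..A, (A - u) * R u) =
            ∫ u in Ioc (0:ℝ) A, (A - u) * R u :=
          intervalIntegral.integral_of_le hA.le
        rw [h1, h2, h3]
        have h4 : (∫ u in Ioc (0:ℝ) A, (A - u) * R u) =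
            ∫ u in Ioc (0:ℝ) A, (A * R u - u * R u) := by
          congr 1; ext u; ring
        rw [h4, integral_sub (hint1.const_mul A) hint2, integral_const_mul A R]
      -- split of L
      have hsplit : IR + tail = L := by
        rw [hIRdef, htaildef, hLdef,
          ← setIntegral_union (Ioc_disjoint_Ioi le_rfl) measurableSet_Ioi hint1 hint4,
          Ioc_union_Ioi_eq_Ioi hA.le]
      have htail_nonneg : 0 ≤ tail :=
        setIntegral_nonneg measurableSet_Ioi fun u _ => hRpos u
      have hIuR_nonneg : 0 ≤ IuR :=
        setIntegral_nonneg measurableSet_Ioc fun u hu => mul_nonneg hu.1.le (hRpos u)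
      -- tail estimate : A * tail ≤ ∫_{Ioi A} u R u ≤ C
      have htail1 : A * tail ≤ ∫ u in Ioi A, u * R u := by
        rw [← integral_const_mul A R]
        exact setIntegral_mono_on (hint4.const_mul A) hint3 measurableSet_Ioi
          fun u hu => mul_le_mul_of_nonneg_right (le_of_lt hu) (hRpos u)
      have htail2 : (∫ u in Ioi A, u * R u) ≤ C :=
        setIntegral_mono_set hRmom hmomnn ((Ioi_subset_Ioi hA.le).eventuallyLE)
      have hIuR_le : IuR ≤ C :=
        setIntegral_mono_set hRmom hmomnn (Ioc_subset_Ioi_self.eventuallyLE)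
      have hw : T⁻¹ * T = 1 := inv_mul_cancel₀ hT.ne'
      have hIR : IR = L - tail := by linarith
      have hE' : T⁻¹ * E T v - v * m * QA * (L + 1) =
          -(QA * m * (v * tail + T⁻¹ * IuR)) := by
        rw [hE T hT v hv0, ← hAdef, hcv, hIR, hAdef]
        linear_combination (QA * m * (v + v * (L - tail))) * hw
      rw [hE', abs_neg,
        abs_of_nonneg (mul_nonneg (mul_nonneg hQA.1 hm) (add_nonneg (mul_nonneg hv0 htail_nonneg) (mul_nonneg (inv_nonneg.mpr hT.le) hIuR_nonneg)))]
      have h1 : v * tail ≤ T⁻¹ * C := by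
        have h2 : A * tail ≤ C := htail1.trans htail2
        have h3 : v * tail = T⁻¹ * (A * tail) := by
          rw [hAdef]; field_simp
        rw [h3]
        exact mul_le_mul_of_nonneg_left h2 (inv_nonneg.mpr hT.le)
      have h4 : T⁻¹ * IuR ≤ T⁻¹ * C :=
        mul_le_mul_of_nonneg_left hIuR_le (inv_nonneg.mpr hT.le)
      have h5 : QA * m * (v * tail + T⁻¹ * IuR) ≤ QA * m * (T⁻¹ * C + T⁻¹ * C) := by
        have := add_le_add h1 h4
        exact mul_le_mul_of_nonneg_left this (mul_nonneg hQA.1 hm)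
      calc QA * m * (v * tail + T⁻¹ * IuR) ≤ QA * m * (T⁻¹ * C + T⁻¹ * C) := h5
        _ = QA * m * (2 * C) * T⁻¹ := by ring
  haveI : Nonempty (Icc (0:ℝ) b) := ⟨⟨0, ⟨le_rfl, hb.le⟩⟩⟩
  have hbound : Tendsto (fun T : ℝ => QA * m * (2 * C) * T⁻¹) atTop (nhds 0) := by
    have := (tendsto_const_nhds (x := QA * m * (2 * C)) (f := atTop (α := ℝ))).mul
      tendsto_inv_atTop_zero
    simpa using this
  refine squeeze_zero' ?_ ?_ hbound
  · filter_upwards [eventually_gt_atTop (0:ℝ)] with T hT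
    exact Real.iSup_nonneg fun v => abs_nonneg _
  · filter_upwards [eventually_gt_atTop (0:ℝ)] with T hT
    exact ciSup_le fun v => key T hT v v.2.1 v.2.2
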